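/- For every k ∈ ℕ, let M_k be the 2^k × 2^k matrix with rows and columns indexed by subsets of [k], where M_k[S, T] = 1 if |S ∩ T| is even and 0 otherwise. Then the rank of M_k over ℚ equals 2^k, i.e., M_k is invertible over the rationals. -/

import Mathlib

open Finset

lemma char_prod {k : ℕ} (A U : Finset (Fin k)) :
    (-1:ℚ)^(A ∩ U).card = ∏ i ∈ U, (if i ∈ A then (-1:ℚ) else 1) := by
  rw [← Finset.prod_filter, Finset.filter_mem_eq_inter, Finset.prod_const, Finset.inter_comm]

lemma char_orth {k : ℕ} (S T : Finset (Fin k)) :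
    ∑ U : Finset (Fin k), (-1:ℚ)^(S ∩ U).card * (-1:ℚ)^(T ∩ U).card
      = if S = T then (2:ℚ)^k else 0 := by
  have key : ∀ U : Finset (Fin k),
      (-1:ℚ)^(S ∩ U).card * (-1:ℚ)^(T ∩ U).card
        = ∏ i ∈ U, ((if i ∈ S then (-1:ℚ) else 1) * (if i ∈ T then (-1:ℚ) else 1)) := by
    intro U; rw [char_prod, char_prod, ← Finset.prod_mul_distrib]
  simp only [key]
  have hsum : ∑ U : Finset (Fin k),
      ∏ i ∈ U, ((if i ∈ S then (-1:ℚ) else 1) * (if i ∈ T then (-1:ℚ) else 1))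
      = ∏ i : Fin k, ((if i ∈ S then (-1:ℚ) else 1) * (if i ∈ T then (-1:ℚ) else 1) + 1) := by
    rw [Finset.prod_add]
    simp [Finset.powerset_univ]
  rw [hsum]
  split_ifs with h
  · subst h
    have h2 : ∀ i : Fin k, i ∈ Finset.univ →
        ((if i ∈ S then (-1:ℚ) else 1) * (if i ∈ S then (-1:ℚ) else 1) + 1) = 2 := by
      intro i _; split_ifs <;> norm_num
    rw [Finset.prod_congr rfl h2, Finset.prod_const]
    simp
  · obtain ⟨i, hi⟩ : ∃ i, ¬ (i ∈ S ↔ i ∈ T) := by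
      by_contra hc
      push_neg at hc
      exact h (Finset.ext fun i => hc i)
    refine Finset.prod_eq_zero (Finset.mem_univ i) ?_
    rcases Classical.em (i ∈ S) with h1 | h1 <;> rcases Classical.em (i ∈ T) with h2 | h2 <;>
      simp [h1, h2] at hi ⊢

theorem rank_evenIntersectionMatrix_Q (k : ℕ) :
    (Matrix.of fun S T : Finset (Fin k) =>
      if Even (S ∩ T).card then (1 : ℚ) else 0).rank = 2 ^ k := by
  set M : Matrix (Finset (Fin k)) (Finset (Fin k)) ℚ :=
    Matrix.of fun S T : Finset (Fin k) => if Even (S ∩ T).card then (1 : ℚ) else 0 with hM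
  set B : Matrix (Finset (Fin k)) (Finset (Fin k)) ℚ :=
    Matrix.of fun U T : Finset (Fin k) =>
      (-1:ℚ)^(U ∩ T).card * (2 / 2^k) - (if U = ∅ then (if T = ∅ then 1 else 0) else 0) with hB
  have h2k : (2:ℚ)^k ≠ 0 := by positivity
  have hMent : ∀ S T : Finset (Fin k), M S T = ((-1:ℚ)^(S ∩ T).card + 1) / 2 := by
    intro S T
    rcases Nat.even_or_odd (S ∩ T).card with h | h
    · simp [hM, h, Even.neg_one_pow h]
    · simp [hM, Nat.not_even_iff_odd.mpr h, Odd.neg_one_pow h]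
  have hinv : M * B = 1 := by
    ext S T
    rw [Matrix.mul_apply]
    have expand : ∀ U : Finset (Fin k), M S U * B U T
        = (1/2^k) * ((-1:ℚ)^(S ∩ U).card * (-1:ℚ)^(T ∩ U).card)
          + (1/2^k) * ((-1:ℚ)^((∅ : Finset (Fin k)) ∩ U).card * (-1:ℚ)^(T ∩ U).card)
          - (if U = ∅ then (if T = ∅ then 1 else 0) else 0) := by
      intro U
      rw [hMent]
      simp only [hB, Matrix.of_apply, Finset.empty_inter, Finset.card_empty, pow_zero, one_mul]
      rw [Finset.inter_comm U T]
      have hite : ((-1:ℚ)^(S ∩ U).card + 1)/2 *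
          (if U = ∅ then (if T = ∅ then (1:ℚ) else 0) else 0)
          = (if U = ∅ then (if T = ∅ then (1:ℚ) else 0) else 0) := by
        split_ifs with h1 h2
        · subst h1; norm_num
        · simp
        · simp
      rw [mul_sub, hite]
      have : ((-1:ℚ)^(S ∩ U).card + 1)/2 * ((-1:ℚ)^(T ∩ U).card * (2 / 2^k))
          = (1/2^k) * ((-1:ℚ)^(S ∩ U).card * (-1:ℚ)^(T ∩ U).card)
            + (1/2^k) * ((-1:ℚ)^(T ∩ U).card) := by
        field_simp
      rw [this]
    simp only [expand]
    rw [Finset.sum_sub_distrib, Finset.sum_add_distrib, ← Finset.mul_sum, ← Finset.mul_sum,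
      char_orth, char_orth]
    simp only [Finset.sum_ite_eq', Finset.mem_univ, if_true]
    rw [Matrix.one_apply]
    by_cases hST : S = T
    · subst hST
      by_cases hT : S = ∅
      · subst hT
        rw [if_pos rfl]
        field_simp
        norm_num
      · rw [if_pos rfl, if_neg (fun h => hT h.symm), if_neg hT, if_pos rfl]
        field_simp
        norm_num
    · by_cases hT : T = ∅
      · subst hT
        rw [if_neg hST, if_pos rfl]
        field_simp
        rw [if_neg hST]
        norm_num
      · rw [if_neg hST, if_neg (fun h => hT h.symm), if_neg hT]
        simp [hST]
  have hunit : IsUnit M := ⟨⟨M, B, hinv, mul_eq_one_comm.mp hinv⟩, rfl⟩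
  rw [hM] at hunit ⊢
  rw [Matrix.rank_of_isUnit _ hunit]
  simp [Fintype.card_finset]
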